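/- arXiv:2206.01113 — 2 statements merged into one kernel-verified Lean document; each statement's English description precedes it below -/
import Mathlib

section
/- Let X be a set. The Boolean algebra of clopen subsets of the Cantor-type space 2^X (product topology on X → Bool) is the free Boolean algebra on the set X, with generator x ∈ X corresponding to the clopen {f : X → Bool | f x = true}. -/
open TopologicalSpace
open scoped Classical

namespace CPBF
variable {X : Type*}

lemma clopens_coe_finset_inf {ι α : Type*} [TopologicalSpace α] (s : Finset ι)
    (f : ι → Clopens α) : (↑(s.inf f) : Set α) = ⋂ i ∈ s, ↑(f i) := by
  have h : (↑(s.inf f) : Set α) = s.inf fun i => (↑(f i) : Set α) :=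
    map_finset_inf (⟨⟨(↑), Clopens.coe_inf⟩, Clopens.coe_top⟩ :
      InfTopHom (Clopens α) (Set α)) s f
  rw [h, Finset.inf_set_eq_iInter]

lemma clopens_coe_finset_sup {ι α : Type*} [TopologicalSpace α] (s : Finset ι)
    (f : ι → Clopens α) : (↑(s.sup f) : Set α) = ⋃ i ∈ s, ↑(f i) := by
  have h : (↑(s.sup f) : Set α) = s.sup fun i => (↑(f i) : Set α) :=
    map_finset_sup (⟨⟨(↑), Clopens.coe_sup⟩, Clopens.coe_bot⟩ :
      SupBotHom (Clopens α) (Set α)) s f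
  rw [h, Finset.sup_set_eq_biUnion]

/-- Generator clopen. -/
def G (x : X) : Clopens (X → Bool) :=
  ⟨{f | f x = true}, (isClopen_discrete {true}).preimage (continuous_apply x)⟩

@[simp] lemma mem_G {x : X} {f : X → Bool} : f ∈ G x ↔ f x = true := Iff.rfl

/-- Cylinder clopen over coordinates `s` with "true set" `T`. -/
noncomputable def Cyl (s T : Finset X) : Clopens (X → Bool) :=
  s.inf fun x => if x ∈ T then G x else (G x)ᶜ

lemma mem_Cyl {s T : Finset X} {f : X → Bool} :
    f ∈ Cyl s T ↔ ∀ x ∈ s, (f x = true ↔ x ∈ T) := by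
  rw [← SetLike.mem_coe, Cyl, clopens_coe_finset_inf]
  simp only [Set.mem_iInter]
  refine forall₂_congr fun x hx => ?_
  by_cases hT : x ∈ T <;> simp [hT, SetLike.mem_coe]

lemma cyl_nonempty (s T : Finset X) : ∃ f : X → Bool, f ∈ Cyl s T := by
  refine ⟨fun x => decide (x ∈ T), ?_⟩
  simp [mem_Cyl]


/-- `U` depends only on coordinates in `s`. -/
def Supports (s : Finset X) (U : Set (X → Bool)) : Prop :=
  ∀ f g : X → Bool, (∀ x ∈ s, f x = g x) → f ∈ U → g ∈ U

lemma Supports.mono {s t : Finset X} {U : Set (X → Bool)} (h : Supports s U)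
    (hst : s ⊆ t) : Supports t U :=
  fun f g hfg => h f g fun x hx => hfg x (hst hx)

lemma Supports.inter {s : Finset X} {U V : Set (X → Bool)}
    (hU : Supports s U) (hV : Supports s V) : Supports s (U ∩ V) :=
  fun f g hfg hf => ⟨hU f g hfg hf.1, hV f g hfg hf.2⟩

lemma Supports.union {s : Finset X} {U V : Set (X → Bool)}
    (hU : Supports s U) (hV : Supports s V) : Supports s (U ∪ V) :=
  fun f g hfg hf => hf.elim (fun h => Or.inl (hU f g hfg h)) fun h => Or.inr (hV f g hfg h)

/-- Every clopen set has a finite support. -/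
lemma exists_support (U : Clopens (X → Bool)) : ∃ s : Finset X, Supports s (↑U) := by
  classical
  have hcpt : IsCompact (↑U : Set (X → Bool)) := U.isClopen.isClosed.isCompact
  have hopen : IsOpen (↑U : Set (X → Bool)) := U.isClopen.isOpen
  -- for each f ∈ U, get a finite set of coordinates
  have key : ∀ f ∈ (↑U : Set (X → Bool)), ∃ I : Finset X,
      {g : X → Bool | ∀ x ∈ I, g x = f x} ⊆ ↑U := by
    intro f hf
    obtain ⟨I, u, hIu, hsub⟩ := isOpen_pi_iff.mp hopen f hf
    refine ⟨I, fun g hg => hsub fun x hx => ?_⟩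
    rw [hg x hx]; exact (hIu x hx).2
  choose I hI using key
  -- the cylinders cover U
  obtain ⟨t, ht⟩ := hcpt.elim_finite_subcover
      (fun f : {f // f ∈ (↑U : Set (X → Bool))} => {g : X → Bool | ∀ x ∈ I f.1 f.2, g x = f.1 x})
      (fun f => by
        have : IsOpen (⋂ x ∈ I f.1 f.2, {g : X → Bool | g x = f.1 x}) := by
          refine isOpen_biInter_finset fun x hx => ?_
          exact (isOpen_discrete ({f.1 x} : Set Bool)).preimage (continuous_apply (A := fun _ : X => Bool) x)
        convert this using 1
        ext g; simp [Set.mem_iInter])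
      (fun f hf => Set.mem_iUnion.mpr ⟨⟨f, hf⟩, fun x _ => rfl⟩)
  refine ⟨t.sup fun f => I f.1 f.2, ?_⟩
  intro f g hfg hf
  obtain ⟨j, hjt, hj⟩ := Set.mem_iUnion₂.mp (ht hf)
  have hsub : I j.1 j.2 ⊆ t.sup fun f => I f.1 f.2 := Finset.le_sup (f := fun f => I f.1 f.2) hjt
  exact hI j.1 j.2 fun x hx => (hfg x (hsub hx)).symm.trans (hj x hx)

/-- Decomposition of a supported clopen into cylinders. -/
lemma decomposition {s : Finset X} {U : Clopens (X → Bool)} (hs : Supports s ↑U) :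
    U = (s.powerset.filter fun T => Cyl s T ≤ U).sup fun T => Cyl s T := by
  classical
  apply SetLike.coe_injective
  rw [clopens_coe_finset_sup]
  apply Set.Subset.antisymm
  · intro f hf
    set T : Finset X := s.filter fun x => f x = true with hT
    have hfT : f ∈ Cyl s T := by
      simp only [mem_Cyl, hT, Finset.mem_filter]
      exact fun x hx => ⟨fun h => ⟨hx, h⟩, fun h => h.2⟩
    have hle : Cyl s T ≤ U := by
      intro g hg
      rw [mem_Cyl] at hg
      rw [mem_Cyl] at hfT
      rw [← SetLike.mem_coe]
      refine hs f g (fun x hx => ?_) hf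
      have h1 := hfT x hx; have h2 := hg x hx
      revert h1 h2; cases f x <;> cases g x <;> simp
    exact Set.mem_biUnion (Finset.mem_filter.mpr ⟨Finset.mem_powerset.mpr
      (Finset.filter_subset _ _), hle⟩) hfT
  · intro f hf
    obtain ⟨T, hT, hfT⟩ := Set.mem_iUnion₂.mp hf
    exact (Finset.mem_filter.mp hT).2 hfT

section Alg
variable {B : Type} [BooleanAlgebra B] (φ : X → B)

/-- Boolean-algebra value of the cylinder. -/
noncomputable def elt (s T : Finset X) : B :=
  s.inf fun x => if x ∈ T then φ x else (φ x)ᶜ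

lemma elt_insert_notmem {y : X} {s T : Finset X} (hyT : y ∉ T) :
    elt φ (insert y s) T = (φ y)ᶜ ⊓ elt φ s T := by
  rw [elt, Finset.inf_insert, if_neg hyT, elt]

lemma elt_insert_mem {y : X} {s T : Finset X} (hys : y ∉ s) :
    elt φ (insert y s) (insert y T) = φ y ⊓ elt φ s T := by
  rw [elt, Finset.inf_insert, if_pos (Finset.mem_insert_self y T), elt]
  congr 1
  refine Finset.inf_congr rfl fun x hx => ?_
  have : x ≠ y := fun h => hys (h ▸ hx)
  simp [Finset.mem_insert, this]

lemma elt_disjoint {s T T' : Finset X} (hT : T ⊆ s) (hT' : T' ⊆ s) (hne : T ≠ T') :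
    elt φ s T ⊓ elt φ s T' = ⊥ := by
  have : ∃ x ∈ s, (x ∈ T ∧ x ∉ T') ∨ (x ∉ T ∧ x ∈ T') := by
    by_contra hc
    push_neg at hc
    apply hne
    ext x
    constructor
    · intro hx
      by_contra hx'
      exact hx' ((hc x (hT hx)).1 hx)
    · intro hx
      by_contra hx'
      exact (hc x (hT' hx)).2 hx' hx
  obtain ⟨x, hxs, hcase⟩ := this
  have h1 : elt φ s T ≤ (if x ∈ T then φ x else (φ x)ᶜ) := Finset.inf_le hxs
  have h2 : elt φ s T' ≤ (if x ∈ T' then φ x else (φ x)ᶜ) := Finset.inf_le hxs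
  rcases hcase with ⟨hT1, hT2⟩ | ⟨hT1, hT2⟩
  · rw [if_pos hT1] at h1; rw [if_neg hT2] at h2
    exact le_bot_iff.mp ((inf_le_inf h1 h2).trans_eq inf_compl_eq_bot)
  · rw [if_neg hT1] at h1; rw [if_pos hT2] at h2
    exact le_bot_iff.mp ((inf_le_inf h1 h2).trans_eq compl_inf_eq_bot)

/-- The candidate value of the extension on `U`, computed over coordinates `s`. -/
noncomputable def E (s : Finset X) (U : Clopens (X → Bool)) : B :=
  (s.powerset.filter fun T => Cyl s T ≤ U).sup fun T => elt φ s T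

end Alg

lemma Cyl_le_of_subset {s s' T T' : Finset X} (hss : s ⊆ s')
    (hTT : ∀ x ∈ s, (x ∈ T ↔ x ∈ T')) : Cyl s' T' ≤ Cyl s T := by
  rw [← SetLike.coe_subset_coe]
  intro f hf
  rw [SetLike.mem_coe, mem_Cyl] at hf ⊢
  exact fun x hx => (hf x (hss hx)).trans (hTT x hx).symm

lemma cyl_le_up {y : X} {s T : Finset X} {U : Clopens (X → Bool)} (hys : y ∉ s)
    (hyT : y ∉ T) (hsup : Supports s ↑U) (c : Bool)
    (h : Cyl (insert y s) (if c then insert y T else T) ≤ U) : Cyl s T ≤ U := by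
  rw [← SetLike.coe_subset_coe] at h ⊢
  intro f hf
  rw [SetLike.mem_coe, mem_Cyl] at hf
  have hf' : Function.update f y c ∈ (Cyl (insert y s) (if c then insert y T else T) : Set _) := by
    rw [SetLike.mem_coe, mem_Cyl]
    intro x hx
    rcases Finset.mem_insert.mp hx with rfl | hx
    · rw [Function.update_self]
      cases c <;> simp [hyT]
    · have hne : x ≠ y := fun hc => hys (hc ▸ hx)
      rw [Function.update_of_ne hne]
      cases c <;> simp [hne, hf x hx]
  refine hsup _ f (fun x hx => ?_) (h hf')
  have hne : x ≠ y := fun hc => hys (hc ▸ hx)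
  exact Function.update_of_ne hne c f

lemma cyl_le_iff₁ {y : X} {s T : Finset X} {U : Clopens (X → Bool)} (hys : y ∉ s)
    (hyT : y ∉ T) (hsup : Supports s ↑U) :
    (Cyl (insert y s) T ≤ U ↔ Cyl s T ≤ U) := by
  constructor
  · intro h; exact cyl_le_up hys hyT hsup false (by simpa using h)
  · intro h
    exact le_trans (Cyl_le_of_subset (Finset.subset_insert y s) fun x _ => Iff.rfl) h

lemma cyl_le_iff₂ {y : X} {s T : Finset X} {U : Clopens (X → Bool)} (hys : y ∉ s)
    (hyT : y ∉ T) (hsup : Supports s ↑U) :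
    (Cyl (insert y s) (insert y T) ≤ U ↔ Cyl s T ≤ U) := by
  constructor
  · intro h; exact cyl_le_up hys hyT hsup true (by simpa using h)
  · intro h
    refine le_trans (Cyl_le_of_subset (Finset.subset_insert y s) fun x hx => ?_) h
    have hne : x ≠ y := fun hc => hys (hc ▸ hx)
    simp [Finset.mem_insert, hne]

section Alg2
variable {B : Type} [BooleanAlgebra B] (φ : X → B)

lemma E_insert {y : X} {s : Finset X} {U : Clopens (X → Bool)} (hys : y ∉ s)
    (hsup : Supports s ↑U) : E φ (insert y s) U = E φ s U := by
  classical
  rw [E, Finset.powerset_insert, Finset.filter_union, Finset.sup_union,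
    Finset.filter_image, Finset.sup_image]
  have hmem : ∀ T ∈ s.powerset, y ∉ T := fun T hT hy =>
    hys (Finset.mem_powerset.mp hT hy)
  have e1 : (s.powerset.filter fun T => Cyl (insert y s) T ≤ U) =
      s.powerset.filter fun T => Cyl s T ≤ U :=
    Finset.filter_congr fun T hT => cyl_le_iff₁ hys (hmem T hT) hsup
  have e2 : (s.powerset.filter fun T => Cyl (insert y s) (insert y T) ≤ U) =
      s.powerset.filter fun T => Cyl s T ≤ U :=
    Finset.filter_congr fun T hT => cyl_le_iff₂ hys (hmem T hT) hsup
  rw [e1]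
  have e2' : (s.powerset.filter fun T => (fun T => Cyl (insert y s) T ≤ U) ((fun T => insert y T) T)) =
      s.powerset.filter fun T => Cyl s T ≤ U := e2
  rw [e2']
  have hsub : ∀ T ∈ s.powerset.filter fun T => Cyl s T ≤ U, y ∉ T := fun T hT =>
    hmem T (Finset.mem_filter.mp hT).1
  have c1 : ((s.powerset.filter fun T => Cyl s T ≤ U).sup fun T => elt φ (insert y s) T) =
      (φ y)ᶜ ⊓ (s.powerset.filter fun T => Cyl s T ≤ U).sup fun T => elt φ s T := by
    rw [Finset.sup_inf_distrib_left]
    exact Finset.sup_congr rfl fun T hT => elt_insert_notmem φ (hsub T hT)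
  have c2 : ((s.powerset.filter fun T => Cyl s T ≤ U).sup
        ((fun T => elt φ (insert y s) T) ∘ fun T => insert y T)) =
      φ y ⊓ (s.powerset.filter fun T => Cyl s T ≤ U).sup fun T => elt φ s T := by
    rw [Finset.sup_inf_distrib_left]
    exact Finset.sup_congr rfl fun T _ => elt_insert_mem φ hys
  rw [c1, c2, ← inf_sup_right, compl_sup_eq_top, top_inf_eq, E]

end Alg2

section Alg3
variable {B : Type} [BooleanAlgebra B] (φ : X → B)

lemma E_union {s : Finset X} {U : Clopens (X → Bool)} (hsup : Supports s ↑U)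
    (u : Finset X) (hd : Disjoint s u) : E φ (s ∪ u) U = E φ s U := by
  classical
  induction u using Finset.induction with
  | empty => rw [Finset.union_empty]
  | @insert y u hy ih =>
    have hd' : Disjoint s u := hd.mono_right (Finset.subset_insert y u)
    have hys : y ∉ s ∪ u := by
      simp only [Finset.mem_union]
      rintro (h | h)
      · exact (Finset.disjoint_left.mp hd) h (Finset.mem_insert_self y u)
      · exact hy h
    rw [Finset.union_insert, E_insert φ hys (hsup.mono Finset.subset_union_left), ih hd']

lemma E_welldef {s t : Finset X} {U : Clopens (X → Bool)} (hs : Supports s ↑U)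
    (ht : Supports t ↑U) : E φ s U = E φ t U := by
  classical
  have h1 : E φ (s ∪ t) U = E φ s U := by
    rw [← Finset.union_sdiff_self_eq_union]
    exact E_union φ hs _ Finset.sdiff_disjoint.symm
  have h2 : E φ (t ∪ s) U = E φ t U := by
    rw [← Finset.union_sdiff_self_eq_union]
    exact E_union φ ht _ Finset.sdiff_disjoint.symm
  rw [← h1, Finset.union_comm, h2]

/-- The extension of `φ` to clopens. -/
noncomputable def hFun (U : Clopens (X → Bool)) : B :=
  E φ (exists_support U).choose U

lemma hFun_eq {s : Finset X} {U : Clopens (X → Bool)} (hs : Supports s ↑U) :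
    hFun φ U = E φ s U :=
  E_welldef φ (exists_support U).choose_spec hs

end Alg3

lemma cyl_not_le_bot (s T : Finset X) : ¬ Cyl s T ≤ (⊥ : Clopens (X → Bool)) := by
  intro h
  obtain ⟨f, hf⟩ := cyl_nonempty s T
  rw [← SetLike.coe_subset_coe] at h
  exact (h hf : f ∈ (⊥ : Clopens (X → Bool)))

lemma supports_bot (s : Finset X) : Supports s (↑(⊥ : Clopens (X → Bool))) :=
  fun _ _ _ hf => hf.elim

lemma supports_top (s : Finset X) : Supports s (↑(⊤ : Clopens (X → Bool))) :=
  fun _ _ _ _ => trivial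

lemma supports_G (x : X) : Supports {x} (↑(G x)) := by
  intro f g hfg hf
  have := hfg x (Finset.mem_singleton_self x)
  simpa [SetLike.mem_coe, mem_G, ← this] using hf

lemma cyl_le_sup_iff {s T : Finset X} {U V : Clopens (X → Bool)}
    (hU : Supports s ↑U) (hV : Supports s ↑V) :
    Cyl s T ≤ U ⊔ V ↔ Cyl s T ≤ U ∨ Cyl s T ≤ V := by
  constructor
  · intro h
    by_cases hu : Cyl s T ≤ U
    · exact Or.inl hu
    · right
      rw [← SetLike.coe_subset_coe] at hu h ⊢
      obtain ⟨f, hf, hfU⟩ := Set.not_subset.mp hu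
      have hfV : f ∈ (↑V : Set (X → Bool)) := by
        have := h hf
        rw [Clopens.coe_sup] at this
        exact this.resolve_left hfU
      intro g hg
      rw [SetLike.mem_coe, mem_Cyl] at hf hg
      refine hV f g (fun x hx => ?_) hfV
      have h1 := hf x hx; have h2 := hg x hx
      revert h1 h2; cases f x <;> cases g x <;> simp
  · rintro (h | h)
    · exact h.trans le_sup_left
    · exact h.trans le_sup_right

section Alg4
variable {B : Type} [BooleanAlgebra B] (φ : X → B)

lemma hFun_bot : hFun φ (⊥ : Clopens (X → Bool)) = ⊥ := by
  rw [hFun_eq φ (supports_bot ∅), E]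
  rw [Finset.filter_false_of_mem fun T _ => cyl_not_le_bot ∅ T, Finset.sup_empty]

lemma hFun_top : hFun φ (⊤ : Clopens (X → Bool)) = ⊤ := by
  rw [hFun_eq φ (supports_top ∅), E, Finset.powerset_empty,
    Finset.filter_true_of_mem fun T _ => le_top, Finset.sup_singleton, elt,
    Finset.inf_empty]

lemma sup_elt_inter {s : Finset X} {A C : Finset (Finset X)} (hA : A ⊆ s.powerset)
    (hC : C ⊆ s.powerset) :
    (A ∩ C).sup (fun T => elt φ s T) = A.sup (fun T => elt φ s T) ⊓ C.sup (fun T => elt φ s T) := by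
  classical
  apply le_antisymm
  · exact le_inf (Finset.sup_mono Finset.inter_subset_left)
      (Finset.sup_mono Finset.inter_subset_right)
  · rw [Finset.sup_inf_distrib_right]
    refine Finset.sup_le fun T hT => ?_
    rw [Finset.sup_inf_distrib_left]
    refine Finset.sup_le fun T' hT' => ?_
    by_cases h : T = T'
    · subst h
      rw [inf_idem]
      exact Finset.le_sup (Finset.mem_inter.mpr ⟨hT, hT'⟩)
    · rw [elt_disjoint φ (Finset.mem_powerset.mp (hA hT))
        (Finset.mem_powerset.mp (hC hT')) h]
      exact bot_le

lemma hFun_inf {U V : Clopens (X → Bool)} {s : Finset X}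
    (hU : Supports s ↑U) (hV : Supports s ↑V) :
    hFun φ (U ⊓ V) = hFun φ U ⊓ hFun φ V := by
  classical
  have hUV : Supports s ↑(U ⊓ V) := by
    rw [Clopens.coe_inf]; exact hU.inter hV
  rw [hFun_eq φ hUV, hFun_eq φ hU, hFun_eq φ hV, E, E, E]
  have : (s.powerset.filter fun T => Cyl s T ≤ U ⊓ V) =
      (s.powerset.filter fun T => Cyl s T ≤ U) ∩ (s.powerset.filter fun T => Cyl s T ≤ V) := by
    rw [← Finset.filter_and]
    exact Finset.filter_congr fun T _ => le_inf_iff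
  rw [this]
  exact sup_elt_inter φ (Finset.filter_subset _ _) (Finset.filter_subset _ _)

lemma hFun_sup {U V : Clopens (X → Bool)} {s : Finset X}
    (hU : Supports s ↑U) (hV : Supports s ↑V) :
    hFun φ (U ⊔ V) = hFun φ U ⊔ hFun φ V := by
  classical
  have hUV : Supports s ↑(U ⊔ V) := by
    rw [Clopens.coe_sup]; exact hU.union hV
  rw [hFun_eq φ hUV, hFun_eq φ hU, hFun_eq φ hV, E, E, E]
  have : (s.powerset.filter fun T => Cyl s T ≤ U ⊔ V) =
      (s.powerset.filter fun T => Cyl s T ≤ U) ∪ (s.powerset.filter fun T => Cyl s T ≤ V) := by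
    rw [← Finset.filter_or]
    exact Finset.filter_congr fun T _ => cyl_le_sup_iff hU hV
  rw [this, Finset.sup_union]

lemma hFun_G (x : X) : hFun φ (G x) = φ x := by
  classical
  have hps : ({x} : Finset X).powerset = {∅, {x}} := by
    ext T
    simp [Finset.mem_powerset, Finset.subset_singleton_iff, Finset.mem_insert]
  rw [hFun_eq φ (supports_G x), E, hps]
  have h1 : ¬ Cyl {x} (∅ : Finset X) ≤ G x := by
    intro h
    rw [← SetLike.coe_subset_coe] at h
    have : (fun _ => false : X → Bool) ∈ (Cyl {x} ∅ : Set (X → Bool)) := by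
      rw [SetLike.mem_coe, mem_Cyl]; simp
    have := h this
    simp [SetLike.mem_coe, mem_G] at this
  have h2 : Cyl {x} ({x} : Finset X) ≤ G x := by
    rw [Cyl, Finset.inf_singleton, if_pos (Finset.mem_singleton_self x)]
  rw [show ({∅, {x}} : Finset (Finset X)) = insert ∅ {({x} : Finset X)} from rfl,
    Finset.filter_insert, if_neg h1, Finset.filter_singleton, if_pos h2,
    Finset.sup_singleton, elt, Finset.inf_singleton,
    if_pos (Finset.mem_singleton_self x)]

lemma hom_eq_hFun (h : BoundedLatticeHom (Clopens (X → Bool)) B)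
    (hgen : ∀ x, h (G x) = φ x) (U : Clopens (X → Bool)) : h U = hFun φ U := by
  obtain ⟨s, hs⟩ := exists_support U
  rw [hFun_eq φ hs]
  conv_lhs => rw [decomposition hs]
  rw [map_finset_sup, E]
  refine Finset.sup_congr rfl fun T hT => ?_
  show h (Cyl s T) = elt φ s T
  rw [Cyl, map_finset_inf, elt]
  refine Finset.inf_congr rfl fun x hx => ?_
  show h (if x ∈ T then G x else (G x)ᶜ) = _
  by_cases hxT : x ∈ T
  · rw [if_pos hxT, if_pos hxT, hgen]
  · rw [if_neg hxT, if_neg hxT]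
    have hc : IsCompl (h (G x)) (h (G x)ᶜ) := by
      constructor
      · rw [disjoint_iff, ← map_inf, inf_compl_eq_bot, map_bot]
      · rw [codisjoint_iff, ← map_sup, sup_compl_eq_top, map_top]
    rw [← hc.compl_eq, hgen]

end Alg4

end CPBF




/-- The Boolean algebra of clopen subsets of `2^X = (X → Bool)` (product topology)
is the free Boolean algebra on `X`: the generators `x ↦ {f | f x = true}` have the
universal property that every function from `X` to a Boolean algebra `B` extends
uniquely to a Boolean algebra homomorphism `Clopens (X → Bool) → B`. -/
theorem clopens_pow_bool_free (X : Type*) :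
    ∃ g : X → TopologicalSpace.Clopens (X → Bool),
      (∀ x : X, (g x : Set (X → Bool)) = {f : X → Bool | f x = true}) ∧
      ∀ (B : Type) [BooleanAlgebra B] (φ : X → B),
        ∃! h : BoundedLatticeHom (TopologicalSpace.Clopens (X → Bool)) B,
          ∀ x : X, h (g x) = φ x := by
  classical
  refine ⟨CPBF.G, fun x => rfl, ?_⟩
  intro B _ φ
  refine ⟨⟨⟨⟨CPBF.hFun φ, ?_⟩, ?_⟩, CPBF.hFun_top φ, CPBF.hFun_bot φ⟩, ?_, ?_⟩
  · intro U V
    obtain ⟨s, hs⟩ := CPBF.exists_support U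
    obtain ⟨t, ht⟩ := CPBF.exists_support V
    exact CPBF.hFun_sup φ (hs.mono Finset.subset_union_left)
      (ht.mono Finset.subset_union_right)
  · intro U V
    obtain ⟨s, hs⟩ := CPBF.exists_support U
    obtain ⟨t, ht⟩ := CPBF.exists_support V
    exact CPBF.hFun_inf φ (hs.mono Finset.subset_union_left)
      (ht.mono Finset.subset_union_right)
  · exact fun x => CPBF.hFun_G φ x
  · intro h' hp
    ext U
    exact CPBF.hom_eq_hFun φ h' hp U
end

section
/- Let Y be a finite set with decidable equality and X any set. The ultrafilters of the Boolean algebra B presented by generators X × Y subject to relations 1 ≤ ⋁_{y∈Y}(x,y) for each x ∈ X and (x,y) ∧ (x,y') ≤ 0 for y ≠ y', are in bijection with functions X → Y. -/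
/-- Let `Y` be a finite set with decidable equality and `X` any set.  If `B` is the
Boolean algebra presented by generators `X × Y` subject to the relations
`⊤ ≤ ⋁_{y} (x,y)` and `(x,y) ⊓ (x,y') ≤ ⊥` for `y ≠ y'` (expressed by the
universal property of the presentation), then the ultrafilters of `B` (Boolean
homomorphisms `B → Bool`) are in bijection with the functions `X → Y`. -/
theorem presented_boolean_algebra_ultrafilters
    (X Y : Type*) [Fintype Y] [DecidableEq Y]
    (B : Type*) [BooleanAlgebra B] (g : X × Y → B)
    -- the relations hold in `B`:
    (hcover : ∀ x : X, (Finset.univ.sup fun y : Y => g (x, y)) = ⊤)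
    (hdisj : ∀ (x : X) (y y' : Y), y ≠ y' → g (x, y) ⊓ g (x, y') = ⊥)
    -- universal property: `B` is freely generated by `g` subject to the relations:
    (huniv : ∀ (C : Type) [BooleanAlgebra C] (f : X × Y → C),
      (∀ x : X, (Finset.univ.sup fun y : Y => f (x, y)) = ⊤) →
      (∀ (x : X) (y y' : Y), y ≠ y' → f (x, y) ⊓ f (x, y') = ⊥) →
      ∃! h : BoundedLatticeHom B C, ∀ p : X × Y, h (g p) = f p) :
    ∃ e : (X → Y) ≃ BoundedLatticeHom B Bool,
      ∀ (φ : X → Y) (x : X) (y : Y), (e φ (g (x, y)) = true ↔ φ x = y) := by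
  classical
  set F : (X → Y) → (X × Y → Bool) := fun φ p => decide (φ p.1 = p.2) with hFdef
  have hf1 : ∀ φ : X → Y, ∀ x : X,
      (Finset.univ.sup fun y : Y => F φ (x, y)) = ⊤ := by
    intro φ x
    apply le_antisymm le_top
    have h := Finset.le_sup (f := fun y : Y => F φ (x, y)) (Finset.mem_univ (φ x))
    simpa [hFdef] using h
  have hf2 : ∀ φ : X → Y, ∀ (x : X) (y y' : Y), y ≠ y' →
      F φ (x, y) ⊓ F φ (x, y') = ⊥ := by
    intro φ x y y' hne
    by_cases h : φ x = y
    · subst h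
      simp [hFdef, hne]
    · simp [hFdef, h]
  -- the forward map
  have hEU : ∀ φ : X → Y, ∃! h : BoundedLatticeHom B Bool, ∀ p, h (g p) = F φ p :=
    fun φ => huniv Bool (F φ) (hf1 φ) (hf2 φ)
  set T : (X → Y) → BoundedLatticeHom B Bool := fun φ => (hEU φ).exists.choose with hTdef
  have hT : ∀ φ p, T φ (g p) = F φ p := fun φ => (hEU φ).exists.choose_spec
  have hTuniq : ∀ (φ : X → Y) (h : BoundedLatticeHom B Bool),
      (∀ p, h (g p) = F φ p) → h = T φ := by
    intro φ h hh
    exact ((hEU φ).unique hh (hT φ))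
  -- injectivity
  have hinj : Function.Injective T := by
    intro φ φ' hφ
    funext x
    have h1 : T φ (g (x, φ x)) = true := by simp [hT φ (x, φ x), hFdef]
    rw [hφ] at h1
    rw [hT φ' (x, φ x)] at h1
    have := of_decide_eq_true h1
    exact this.symm
  -- surjectivity
  have hsurj : Function.Surjective T := by
    intro h
    have hex : ∀ x : X, ∃ y : Y, h (g (x, y)) = true := by
      intro x
      by_contra hc
      push_neg at hc
      have hall : ∀ y : Y, h (g (x, y)) = false := by
        intro y
        cases hy : h (g (x, y)) with
        | false => rfl
        | true => exact absurd hy (hc y)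
      have hsup : (Finset.univ.sup fun y : Y => h (g (x, y))) = ⊥ := by
        apply (Finset.sup_eq_bot_iff _ _).mpr
        intro y _
        exact hall y
      have : (Finset.univ.sup fun y : Y => h (g (x, y))) = ⊤ := by
        have := map_finset_sup h Finset.univ (fun y : Y => g (x, y))
        rw [hcover x, map_top] at this
        simpa [Function.comp_def] using this.symm
      rw [hsup] at this
      exact absurd this (by simp)
    choose φ hφ using hex
    refine ⟨φ, (hTuniq φ h ?_).symm⟩
    rintro ⟨x, y⟩
    by_cases hy : φ x = y
    · subst hy
      simp [hFdef, hφ x]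
    · simp only [hFdef]
      rw [decide_eq_false (by simpa using hy)]
      by_contra hc
      have htrue : h (g (x, y)) = true := by
        cases hxy : h (g (x, y)) with
        | false => exact absurd hxy hc
        | true => rfl
      have hne : φ x ≠ y := hy
      have : h (g (x, φ x)) ⊓ h (g (x, y)) = ⊥ := by
        rw [← map_inf, hdisj x (φ x) y hne, map_bot]
      rw [hφ x, htrue] at this
      simp at this
  refine ⟨Equiv.ofBijective T ⟨hinj, hsurj⟩, ?_⟩
  intro φ x y
  change T φ (g (x, y)) = true ↔ φ x = y
  rw [hT φ (x, y)]
  simp [hFdef]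
end
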